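/- The square (X^3 - X + 1)^2 divides some Littlewood polynomial (in fact a Littlewood polynomial of degree 195), but (X^3 - X + 1)^2 divides no Newman polynomial. -/

import Mathlib

open Polynomial

/-- A Littlewood polynomial: all coefficients of X^0,...,X^(deg) lie in {-1,1}. -/
def IsLittlewood (L : Polynomial ℤ) : Prop :=
  ∀ i ≤ L.natDegree, L.coeff i ∈ ({-1, 1} : Set ℤ)

/-- A Newman polynomial: all coefficients in {0,1} and constant term 1. -/
def IsNewman (P : Polynomial ℤ) : Prop :=
  (∀ i, P.coeff i ∈ ({0, 1} : Set ℤ)) ∧ P.coeff 0 = 1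

open Finset

noncomputable def Complex.abs : AbsoluteValue ℂ ℝ where
  toFun z := ‖z‖
  map_mul' := norm_mul
  nonneg' := norm_nonneg
  eq_zero' _ := norm_eq_zero
  add_le' := norm_add_le

theorem Complex.abs_apply (z : ℂ) : Complex.abs z = ‖z‖ := rfl
theorem Complex.abs_ofReal (r : ℝ) : Complex.abs r = |r| := by
  rw [Complex.abs_apply, Complex.norm_real, Real.norm_eq_abs]
theorem Complex.sq_abs (z : ℂ) : Complex.abs z ^ 2 = Complex.normSq z := Complex.sq_norm z
theorem Complex.abs_intCast (n : ℤ) : Complex.abs n = |(n:ℝ)| := Complex.norm_intCast n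
theorem Complex.abs_natCast (n : ℕ) : Complex.abs n = n := Complex.norm_natCast n

abbrev S6 := ℤ × ℤ × ℤ × ℤ × ℤ × ℤ

def SPol {R : Type*} [CommRing R] (st : S6) (α : R) : R :=
  ((st.1:R) + 2*(st.2.2.2.1:R) - 2*(st.2.2.1:R) + (st.2.2.2.2.1:R) - 2*(st.2.2.2.2.2:R))
  + ((st.2.1:R) - 2*(st.2.2.2.1:R) + 2*(st.2.2.2.2.1:R) + (st.2.2.2.2.2:R)) * α
  + ((st.2.2.1:R) - 2*(st.2.2.2.2.1:R) + 2*(st.2.2.2.2.2:R)) * α^2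
  + ((st.2.2.2.1:R) - 2*(st.2.2.2.2.2:R)) * α^3
  + (st.2.2.2.2.1:R) * α^4 + (st.2.2.2.2.2:R) * α^5

def SPdol {R : Type*} [CommRing R] (st : S6) (α : R) : R :=
  ((st.2.1:R) - 2*(st.2.2.2.1:R) + 2*(st.2.2.2.2.1:R) + (st.2.2.2.2.2:R))
  + 2*((st.2.2.1:R) - 2*(st.2.2.2.2.1:R) + 2*(st.2.2.2.2.2:R)) * α
  + 3*((st.2.2.2.1:R) - 2*(st.2.2.2.2.2:R)) * α^2
  + 4*(st.2.2.2.2.1:R) * α^3 + 5*(st.2.2.2.2.2:R) * α^4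

def StQ (q : ℤ → ℤ) (K : ℕ) : S6 :=
  (q ((K:ℤ)-6), q ((K:ℤ)-5), q ((K:ℤ)-4), q ((K:ℤ)-3), q ((K:ℤ)-2), q ((K:ℤ)-1))

def RcheckB (t1 t2 t3 t4 t5 t6 : ℤ) : Bool :=
  (decide ((-t6 + t5 + t4 + (-2)*t3 + t1)*10^12 + 10^6 * min ((-t5 + t4 - t2)*1324717) ((-t5 + t4 - t2)*1324718) + min ((t6 - t5 + t3)*1324717^2) ((t6 - t5 + t3)*1324718^2) ≤ 3080000000000)) &&
  (decide (-3080000000000 ≤ (-t6 + t5 + t4 + (-2)*t3 + t1)*10^12 + 10^6 * max ((-t5 + t4 - t2)*1324717) ((-t5 + t4 - t2)*1324718) + max ((t6 - t5 + t3)*1324717^2) ((t6 - t5 + t3)*1324718^2))) &&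
  (decide ((t6 + (-2)*t5 + (-2)*t4 + t2)*10^12 + 10^6 * min ((t6 + (-2)*t3)*1324717) ((t6 + (-2)*t3)*1324718) + min ((-t6 + (3)*t4)*1324717^2) ((-t6 + (3)*t4)*1324718^2) ≤ 9485000000000)) &&
  (decide (-9485000000000 ≤ (t6 + (-2)*t5 + (-2)*t4 + t2)*10^12 + 10^6 * max ((t6 + (-2)*t3)*1324717) ((t6 + (-2)*t3)*1324718) + max ((-t6 + (3)*t4)*1324717^2) ((-t6 + (3)*t4)*1324718^2))) &&
  (decide ((t5*t6 + (-2)*t5^2 - t4*t6 + (3)*t4*t5 + t3*t5 + (-3)*t3*t4 + t3^2 + t2*t6 + (-3)*t2*t5 + (2)*t2*t4 + t2*t3 - t2^2 + (2)*t1*t4 + (-2)*t1*t3 + t1^2)*10^12 + 10^6 * min ((t6^2 + (-3)*t5*t6 + (2)*t5^2 + t4*t6 - t4^2 + (2)*t3*t6 + (-4)*t3*t5 + (2)*t3*t4 + t3^2 - t2*t6 + t2*t5 + t2*t4 + (-2)*t2*t3 + t1*t5 - t1*t4 + t1*t2)*1324717) ((t6^2 + (-3)*t5*t6 + (2)*t5^2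 + t4*t6 - t4^2 + (2)*t3*t6 + (-4)*t3*t5 + (2)*t3*t4 + t3^2 - t2*t6 + t2*t5 + t2*t4 + (-2)*t2*t3 + t1*t5 - t1*t4 + t1*t2)*1324718) + min ((t5^2 - t4*t6 - t4*t5 + t4^2 + t3*t6 - t3*t5 - t3*t4 + t3^2 + (2)*t2*t5 + (-2)*t2*t4 + t2^2 - t1*t6 + t1*t5 - t1*t3)*1324717^2) ((t5^2 - t4*t6 - t4*t5 + t4^2 + t3*t6 - t3*t5 - t3*t4 + t3^2 + (2)*t2*t5 + (-2)*t2*t4 + t2^2 - t1*t6 + t1*t5 - t1*t3)*1324718^2) ≤ 58300000000000)) &&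
  (decide (-58300000000000 ≤ (t5*t6 + (-2)*t5^2 - t4*t6 + (3)*t4*t5 + t3*t5 + (-3)*t3*t4 + t3^2 + t2*t6 + (-3)*t2*t5 + (2)*t2*t4 + t2*t3 - t2^2 + (2)*t1*t4 + (-2)*t1*t3 + t1^2)*10^12 + 10^6 * max ((t6^2 + (-3)*t5*t6 + (2)*t5^2 + t4*t6 - t4^2 + (2)*t3*t6 + (-4)*t3*t5 + (2)*t3*t4 + t3^2 - t2*t6 + t2*t5 + t2*t4 + (-2)*t2*t3 + t1*t5 - t1*t4 + t1*t2)*1324717) ((t6^2 + (-3)*t5*t6 + (2)*t5^2 + t4*t6 - t4^2 + (2)*t3*t6 + (-4)*t3*t5 + (2)*t3*t4 + t3^2 - t2*t6 + t2*t5 + t2*t4 + (-2)*t2*t3 + t1*t5 - t1*t4 + t1*t2)*1324718) + max ((t5^2 - t4*t6 - t4*t5 + t4^2 + t3*t6 - t3*t5 - t3*t4 + t3^2 + (2)*t2*t5 + (-2)*t2*t4 + t2^2 - t1*t6 + t1*t5 - t1*t3)*1324717^2) ((t5^2 - t4*t6 - t4*t5 + t4^2 + t3*t6 - t3*t5 -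 t3*t4 + t3^2 + (2)*t2*t5 + (-2)*t2*t4 + t2^2 - t1*t6 + t1*t5 - t1*t3)*1324718^2))) &&
  (decide (((4)*t5^2 + (-3)*t4*t6 + (-4)*t4*t5 + t4^2 + (2)*t3*t6 + (6)*t3*t4 + (-4)*t3^2 + (-4)*t2*t5 + (2)*t2*t4 + t2^2)*10^12 + 10^6 * min (((2)*t5*t6 + (-4)*t4*t6 + (9)*t4^2 + (2)*t3*t6 + (-4)*t3*t5 + (-4)*t3*t4 - t2*t6 + (2)*t2*t3)*1324717) (((2)*t5*t6 + (-4)*t4*t6 + (9)*t4^2 + (2)*t3*t6 + (-4)*t3*t5 + (-4)*t3*t4 - t2*t6 + (2)*t2*t3)*1324718) + min ((t6^2 + (-2)*t5*t6 + t4*t6 + (6)*t4*t5 + (-3)*t4^2 + (-4)*t3*t6 + (4)*t3^2 + t2*t6 + (-3)*t2*t4)*1324717^2) ((t6^2 + (-2)*t5*t6 + t4*t6 + (6)*t4*t5 + (-3)*t4^2 + (-4)*t3*t6 + (4)*t3^2 + t2*t6 + (-3)*t2*t4)*1324718^2) ≤ 3420000000000000)) &&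
  (decide (-3420000000000000 ≤ ((4)*t5^2 + (-3)*t4*t6 + (-4)*t4*t5 + t4^2 + (2)*t3*t6 + (6)*t3*t4 + (-4)*t3^2 + (-4)*t2*t5 + (2)*t2*t4 + t2^2)*10^12 + 10^6 * max (((2)*t5*t6 + (-4)*t4*t6 + (9)*t4^2 + (2)*t3*t6 + (-4)*t3*t5 + (-4)*t3*t4 - t2*t6 + (2)*t2*t3)*1324717) (((2)*t5*t6 + (-4)*t4*t6 + (9)*t4^2 + (2)*t3*t6 + (-4)*t3*t5 + (-4)*t3*t4 - t2*t6 + (2)*t2*t3)*1324718) + max ((t6^2 + (-2)*t5*t6 + t4*t6 + (6)*t4*t5 + (-3)*t4^2 + (-4)*t3*t6 + (4)*t3^2 + t2*t6 + (-3)*t2*t4)*1324717^2) ((t6^2 + (-2)*t5*t6 + t4*t6 + (6)*t4*t5 + (-3)*t4^2 + (-4)*t3*t6 + (4)*t3^2 + t2*t6 + (-3)*t2*t4)*1324718^2)))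

def Rcheck (st : S6) : Prop := RcheckB st.1 st.2.1 st.2.2.1 st.2.2.2.1 st.2.2.2.2.1 st.2.2.2.2.2 = true

instance : DecidablePred Rcheck := fun _ => inferInstanceAs (Decidable (_ = true))

def backfn (st : S6) (e : ℤ) : S6 :=
  (e + 2*st.2.2.2.2.1 - st.2.2.2.1 - 2*st.2.2.1 + 2*st.2.1 - st.2.2.2.2.2,
   st.1, st.2.1, st.2.2.1, st.2.2.2.1, st.2.2.2.2.1)

set_option maxHeartbeats 4000000 in
def Cset : List S6 := [(-4,0,-2,1,2,3), (-4,1,-1,2,1,2), (-3,1,-1,2,1,2), (-3,1,0,2,1,1), (-3,2,-1,1,0,0), (-3,2,0,2,1,1), (-3,3,1,3,1,1), (-2,-1,-1,1,1,2), (-2,0,-1,0,1,1), (-2,0,-1,1,1,2), (-2,0,0,3,2,3), (-2,1,-2,0,-1,1), (-2,1,-1,0,0,0), (-2,1,0,2,1,1), (-2,1,0,2,1,2), (-2,1,2,3,3,1), (-2,2,0,1,0,0), (-2,2,0,2,1,1), (-2,2,0,2,1,2), (-2,3,1,3,1,1), (-1,-2,-1,-1,1,1), (-1,-2,0,0,3,2),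 (-1,-1,-1,-1,1,1), (-1,-1,-1,1,1,2), (-1,-1,0,0,2,1), (-1,-1,1,1,2,1), (-1,0,-1,1,0,2), (-1,0,-1,1,1,2), (-1,0,0,0,1,1), (-1,0,0,2,1,2), (-1,0,1,1,2,0), (-1,0,1,1,2,1), (-1,1,-2,0,-1,1), (-1,1,-1,1,-1,1), (-1,1,-1,1,0,2), (-1,1,0,0,0,0), (-1,1,0,2,0,1), (-1,1,0,2,1,2), (-1,1,1,2,1,1), (-1,2,0,1,0,0), (-1,2,0,2,0,1), (-1,2,0,2,1,2), (-1,2,1,2,1,1), (-1,3,0,1,0,0), (0,-2,-1,-1,1,1), (0,-2,1,0,2,1), (0,-2,1,2,3,3), (0,-1,-2,-1,-1,1), (0,-1,-1,-1,1,1), (0,-1,0,-1,1,0), (0,-1,0,1,1,2), (0,-1,1,0,2,0), (0,-1,1,0,2,1), (0,-1,1,1,2,1), (0,0,-2,-1,-1,1), (0,0,-1,-2,-1,-1), (0,0,0,0,0,0), (0,0,0,0,1,1), (0,0,0,1,1,2), (0,0,1,0,1,-1), (0,0,1,1,2,1), (0,0,2,1,2,0), (0,0,3,2,3,0), (0,1,-1,0,-1,1),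 (0,1,-1,1,0,2), (0,1,0,0,0,0), (0,1,0,0,1,1), (0,1,0,1,-1,0), (0,1,0,2,1,2), (0,1,1,2,0,0), (0,1,1,2,1,1), (0,2,-1,0,-1,1), (0,2,0,0,0,0), (0,2,0,1,-1,0), (0,2,0,2,0,1), (0,2,1,1,0,0), (0,2,1,2,0,0), (0,2,1,2,1,1), (0,3,1,1,0,0), (0,3,1,2,-1,0), (0,3,2,3,0,0), (0,4,2,3,0,0), (1,-3,1,0,2,1), (1,-2,0,-1,1,1), (1,-2,1,0,2,1), (1,-1,0,-1,1,1), (1,-1,0,0,0,1), (1,-1,1,-1,1,-1), (1,-1,1,-1,1,0), (1,-1,1,0,2,1), (1,-1,2,1,2,1), (1,0,-2,-1,-1,1), (1,0,-1,-2,-1,-1), (1,0,0,0,0,0), (1,0,0,0,0,1), (1,0,0,1,1,2), (1,0,1,-1,0,-1), (1,0,1,0,2,1), (1,0,2,0,1,-1), (1,0,2,1,1,0), (1,0,2,1,2,0), (1,0,2,1,2,1), (1,0,3,1,2,-1), (1,1,-1,0,-1,1), (1,1,0,0,0,0), (1,1,2,0,0,-2), (1,1,2,1,1,0), (1,1,2,1,2,0),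 (1,1,4,2,3,0), (1,2,-1,0,-1,1), (1,2,0,-1,-1,-1), (1,2,0,0,-2,-1), (1,2,0,1,-1,0), (1,2,1,1,0,0), (1,2,1,2,0,0), (1,2,3,3,1,0), (1,3,0,0,-2,-1), (1,3,1,0,-1,-2), (1,3,1,1,0,0), (1,3,3,1,0,-2), (1,4,2,3,0,0), (2,-3,1,0,2,1), (2,-2,0,-1,1,1), (2,-2,1,0,2,1), (2,-1,0,-1,1,1), (2,-1,1,-1,1,0), (2,-1,1,0,0,0), (2,-1,2,1,2,1), (2,0,-1,-1,-1,1), (2,0,0,-2,-1,-1), (2,0,0,0,0,1), (2,0,1,-1,0,-1), (2,0,1,-1,1,0), (2,0,1,0,0,0), (2,0,2,0,1,-1), (2,0,2,0,2,0), (2,0,2,1,1,0), (2,0,2,1,2,1), (2,1,0,-2,-1,-1), (2,1,1,-1,0,-1), (2,1,1,0,0,0), (2,1,2,0,0,-2), (2,1,2,0,1,-1), (2,1,2,1,1,0), (2,1,4,2,3,0), (2,2,0,0,-2,-1), (2,2,2,0,0,-2), (2,3,0,0,-2,-1), (2,3,3,1,0,-2), (3,-2,2,0,1,0), (3,-1,2,0,1,0),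 (3,0,0,-2,-1,-1), (3,0,1,0,0,0), (3,0,2,-1,0,-1), (3,0,3,1,1,0), (3,1,0,-2,-1,-1), (3,1,0,-1,-2,-1), (3,1,1,0,0,0), (3,1,2,-1,0,-1), (3,1,3,0,0,-2), (3,1,3,1,1,0), (3,2,3,0,0,-2), (3,3,1,0,-2,-1), (4,-1,2,0,1,0), (4,0,2,-1,0,-1), (4,1,2,-1,0,-1), (4,1,3,0,0,-2), (4,1,3,1,1,0), (4,2,3,0,0,-2)]

set_option maxRecDepth 100000 in
set_option maxHeartbeats 2000000 in
lemma mem_step : ∀ t ∈ Cset, ∀ e ∈ ([0,1] : List ℤ), Rcheck (backfn t e) → backfn t e ∈ Cset := by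
  decide

lemma zero_mem : ((0,0,0,0,0,0) : S6) ∈ Cset := by decide
lemma init_not_mem : ((0,0,0,0,0,1) : S6) ∉ Cset := by decide

section Main
variable (q : ℤ → ℤ) (c : ℕ → ℤ)
variable (hq : ∀ n : ℤ, n < 0 → q n = 0)
variable (hrec : ∀ i : ℕ, c i = q ((i:ℤ)-6) - 2*q ((i:ℤ)-4) + 2*q ((i:ℤ)-3) + q ((i:ℤ)-2) - 2*q ((i:ℤ)-1) + q (i:ℤ))

include hq hrec in
lemma lemA {R : Type*} [CommRing R] (α : R) (hα : α^3 - α + 1 = 0) :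
    ∀ K : ℕ, ∑ i ∈ range K, (c i : R) * α^i = -α^K * SPol (StQ q K) α := by
  intro K
  induction K with
  | zero =>
      simp [StQ, SPol, hq (-6) (by norm_num), hq (-5) (by norm_num), hq (-4) (by norm_num),
        hq (-3) (by norm_num), hq (-2) (by norm_num), hq (-1) (by norm_num)]
  | succ K ih =>
      rw [Finset.sum_range_succ, ih]
      have hc : ((c K : ℤ) : R) = (q ((K:ℤ)-6) : R) - 2*(q ((K:ℤ)-4) : R) + 2*(q ((K:ℤ)-3) : R)
          + (q ((K:ℤ)-2) : R) - 2*(q ((K:ℤ)-1) : R) + (q (K:ℤ) : R) := by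
        rw [hrec K]; push_cast; ring
      show -α^K * SPol (StQ q K) α + (c K : R) * α^K = -α^(K+1) * SPol (StQ q (K+1)) α
      have h1 : StQ q (K+1) = (q ((K:ℤ)-5), q ((K:ℤ)-4), q ((K:ℤ)-3), q ((K:ℤ)-2), q ((K:ℤ)-1), q (K:ℤ)) := by
        simp only [StQ]
        push_cast
        rw [show (K:ℤ)+1-6 = (K:ℤ)-5 by ring, show (K:ℤ)+1-5 = (K:ℤ)-4 by ring,
          show (K:ℤ)+1-4 = (K:ℤ)-3 by ring, show (K:ℤ)+1-3 = (K:ℤ)-2 by ring,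
          show (K:ℤ)+1-2 = (K:ℤ)-1 by ring, show (K:ℤ)+1-1 = (K:ℤ) by ring]
      rw [h1]
      simp only [StQ, SPol]
      linear_combination ((α^K) * (q (K:ℤ) : R) * (1 - α + α^3)) * hα + (α^K) * hc

include hq hrec in
lemma lemC {R : Type*} [CommRing R] (α : R) (hα : α^3 - α + 1 = 0) :
    ∀ K : ℕ, ∑ j ∈ range K, ((j:R)+1) * (c (j+1) : R) * α^j
      = -((K:R)+1) * α^K * SPol (StQ q (K+1)) α - α^(K+1) * SPdol (StQ q (K+1)) α := by
  intro K
  induction K with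
  | zero =>
      have h1 : StQ q 1 = (q (-5), q (-4), q (-3), q (-2), q (-1), q 0) := by
        simp only [StQ]; norm_num
      rw [h1]
      simp only [SPol, SPdol, hq (-5) (by norm_num), hq (-4) (by norm_num),
        hq (-3) (by norm_num), hq (-2) (by norm_num), hq (-1) (by norm_num)]
      push_cast
      simp only [Finset.range_zero, Finset.sum_empty]
      linear_combination ((q 0 : R) * (6*α^2 - 2)) * hα
  | succ K ih =>
      rw [Finset.sum_range_succ, ih]
      have hc : ((c (K+1) : ℤ) : R) = (q ((K:ℤ)-5) : R) - 2*(q ((K:ℤ)-3) : R) + 2*(q ((K:ℤ)-2) : R)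
          + (q ((K:ℤ)-1) : R) - 2*(q (K:ℤ) : R) + (q ((K:ℤ)+1) : R) := by
        rw [hrec (K+1)]
        push_cast
        rw [show (K:ℤ)+1-6 = (K:ℤ)-5 by ring, show (K:ℤ)+1-4 = (K:ℤ)-3 by ring,
          show (K:ℤ)+1-3 = (K:ℤ)-2 by ring, show (K:ℤ)+1-2 = (K:ℤ)-1 by ring,
          show (K:ℤ)+1-1 = (K:ℤ) by ring]
      have h1 : StQ q (K+1) = (q ((K:ℤ)-5), q ((K:ℤ)-4), q ((K:ℤ)-3), q ((K:ℤ)-2), q ((K:ℤ)-1), q (K:ℤ)) := by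
        simp only [StQ]
        push_cast
        rw [show (K:ℤ)+1-6 = (K:ℤ)-5 by ring, show (K:ℤ)+1-5 = (K:ℤ)-4 by ring,
          show (K:ℤ)+1-4 = (K:ℤ)-3 by ring, show (K:ℤ)+1-3 = (K:ℤ)-2 by ring,
          show (K:ℤ)+1-2 = (K:ℤ)-1 by ring, show (K:ℤ)+1-1 = (K:ℤ) by ring]
      have h2 : StQ q (K+2) = (q ((K:ℤ)-4), q ((K:ℤ)-3), q ((K:ℤ)-2), q ((K:ℤ)-1), q (K:ℤ), q ((K:ℤ)+1)) := by
        simp only [StQ]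
        push_cast
        rw [show (K:ℤ)+2-6 = (K:ℤ)-4 by ring, show (K:ℤ)+2-5 = (K:ℤ)-3 by ring,
          show (K:ℤ)+2-4 = (K:ℤ)-2 by ring, show (K:ℤ)+2-3 = (K:ℤ)-1 by ring,
          show (K:ℤ)+2-2 = (K:ℤ) by ring, show (K:ℤ)+2-1 = (K:ℤ)+1 by ring]
      rw [show K+1+1 = K+2 by ring, h1, h2]
      simp only [StQ, SPol, SPdol]
      push_cast
      linear_combination (α^K * (q ((K:ℤ)+1) : R) * ((1+(K:R)) - (3+(K:R))*α + (7+(K:R))*α^3)) * hα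
        + (α^K * (1+(K:R))) * hc

omit hq hrec

lemma geo1 {t : ℝ} (h0 : 0 ≤ t) (h1 : t < 1) (M : ℕ) : ∑ j ∈ range M, t^j ≤ 1/(1-t) := by
  have h2 : (0:ℝ) < 1 - t := by linarith
  rw [geom_sum_eq (by intro h; rw [h] at h1; linarith) M]
  rw [show (t^M - 1)/(t-1) = (1 - t^M)/(1-t) by rw [div_eq_div_iff (by linarith) (by linarith)]; ring]
  apply div_le_div₀ (by norm_num) (by nlinarith [pow_nonneg h0 M]) h2 le_rfl

lemma geo2key {t : ℝ} (M : ℕ) :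
    (1-t)^2 * ∑ j ∈ range M, ((j:ℝ)+1)*t^j = 1 - ((M:ℝ)+1)*t^M + (M:ℝ)*t^(M+1) := by
  induction M with
  | zero => simp
  | succ M ih =>
      rw [Finset.sum_range_succ, mul_add, ih]
      push_cast
      ring

lemma geo2 {t : ℝ} (h0 : 0 ≤ t) (h1 : t < 1) (M : ℕ) :
    ∑ j ∈ range M, ((j:ℝ)+1)*t^j ≤ 1/(1-t)^2 := by
  have h2 : (0:ℝ) < 1 - t := by linarith
  rw [le_div_iff₀ (by positivity), mul_comm]
  have hk := geo2key (t := t) M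
  have h3 : (0:ℝ) ≤ ((M:ℝ)+1) - (M:ℝ)*t := by nlinarith [Nat.cast_nonneg (α := ℝ) M]
  have h4 : (0:ℝ) ≤ t^M := pow_nonneg h0 M
  have h5 : t^(M+1) = t^M * t := pow_succ t M
  rw [h5] at hk
  nlinarith [mul_nonneg h4 h3]

include hq hrec

lemma boundR1 (hc1 : ∀ i, |c i| ≤ 1) {ρ : ℝ} (hρ3 : ρ^3 = ρ+1) (hρ1 : 1.3 < ρ) (K : ℕ) :
    |SPol (StQ q K) (-ρ)| ≤ 1/(ρ-1) := by
  have hα : (-ρ)^3 - (-ρ) + 1 = 0 := by linear_combination -hρ3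
  have hA := lemA q c hq hrec (-ρ) hα K
  have hρ0 : (0:ℝ) < ρ := by linarith
  have h1 : |∑ i ∈ range K, (c i:ℝ)*(-ρ)^i| ≤ ρ^K * (1/(ρ-1)) := by
    calc |∑ i ∈ range K, (c i:ℝ)*(-ρ)^i| ≤ ∑ i ∈ range K, |(c i:ℝ)*(-ρ)^i| :=
          Finset.abs_sum_le_sum_abs _ _
    _ ≤ ∑ i ∈ range K, ρ^i := by
        apply Finset.sum_le_sum
        intro i _
        rw [abs_mul, abs_pow, abs_neg, abs_of_pos hρ0]
        have : |(c i:ℝ)| ≤ 1 := by exact_mod_cast hc1 i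
        nlinarith [pow_pos hρ0 i, pow_nonneg hρ0.le i]
    _ ≤ ρ^K * (1/(ρ-1)) := by
        rw [geom_sum_eq (by intro h; rw [h] at hρ1; norm_num at hρ1) K, mul_one_div]
        gcongr
        · linarith
        · linarith
  rw [hA, abs_mul, abs_neg, abs_pow, abs_neg, abs_of_pos hρ0] at h1
  have hpK : (0:ℝ) < ρ^K := pow_pos hρ0 K
  exact le_of_mul_le_mul_left h1 hpK

lemma boundR2 (hc1 : ∀ i, |c i| ≤ 1) {ρ : ℝ} (hρ3 : ρ^3 = ρ+1) (hρ1 : 1.3 < ρ) (K : ℕ) :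
    |SPdol (StQ q (K+1)) (-ρ)| ≤ 1/(ρ-1)^2 := by
  have hα : (-ρ)^3 - (-ρ) + 1 = 0 := by linear_combination -hρ3
  have hρ0 : (0:ℝ) < ρ := by linarith
  have e1 := lemA q c hq hrec (-ρ) hα (K+1)
  have e2 := lemC q c hq hrec (-ρ) hα K
  have e3 : ∑ i ∈ range (K+1), (i:ℝ)*(c i:ℝ)*(-ρ)^i
      = (-ρ) * ∑ j ∈ range K, ((j:ℝ)+1)*(c (j+1):ℝ)*(-ρ)^j := by
    rw [Finset.sum_range_succ' (fun i => (i:ℝ)*(c i:ℝ)*(-ρ)^i) K]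
    rw [Finset.mul_sum]
    simp only [Nat.cast_zero, zero_mul, add_zero, Nat.cast_add, Nat.cast_one]
    apply Finset.sum_congr rfl
    intro j _
    ring
  have key : (-ρ)^(K+2) * SPdol (StQ q (K+1)) (-ρ)
      = ∑ i ∈ range (K+1), (((K:ℝ)+1) - (i:ℝ)) * (c i:ℝ) * (-ρ)^i := by
    have hsplit : ∑ i ∈ range (K+1), (((K:ℝ)+1) - (i:ℝ)) * (c i:ℝ) * (-ρ)^i
        = ((K:ℝ)+1) * ∑ i ∈ range (K+1), (c i:ℝ)*(-ρ)^i
          - ∑ i ∈ range (K+1), (i:ℝ)*(c i:ℝ)*(-ρ)^i := by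
      rw [Finset.mul_sum, ← Finset.sum_sub_distrib]
      apply Finset.sum_congr rfl
      intro i _
      ring
    rw [hsplit, e3, e1, e2]
    ring
  have habs : ρ^(K+2) * |SPdol (StQ q (K+1)) (-ρ)| ≤ ρ^(K+2) * (1/(ρ-1)^2) := by
    have h1 : |(-ρ)^(K+2) * SPdol (StQ q (K+1)) (-ρ)| ≤ ∑ i ∈ range (K+1), (((K:ℝ)+1) - (i:ℝ)) * ρ^i := by
      rw [key]
      calc |∑ i ∈ range (K+1), (((K:ℝ)+1) - (i:ℝ)) * (c i:ℝ) * (-ρ)^i|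
          ≤ ∑ i ∈ range (K+1), |(((K:ℝ)+1) - (i:ℝ)) * (c i:ℝ) * (-ρ)^i| := Finset.abs_sum_le_sum_abs _ _
      _ ≤ ∑ i ∈ range (K+1), (((K:ℝ)+1) - (i:ℝ)) * ρ^i := by
          apply Finset.sum_le_sum
          intro i hi
          have hiK : (i:ℝ) ≤ (K:ℝ) := by exact_mod_cast Nat.lt_succ_iff.mp (Finset.mem_range.mp hi)
          rw [abs_mul, abs_mul, abs_pow, abs_neg, abs_of_pos hρ0,
            abs_of_nonneg (by linarith : (0:ℝ) ≤ ((K:ℝ)+1) - (i:ℝ))]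
          have hci : |(c i:ℝ)| ≤ 1 := by exact_mod_cast hc1 i
          have hp : (0:ℝ) ≤ ρ^i := pow_nonneg hρ0.le i
          have hKi : (0:ℝ) ≤ ((K:ℝ)+1) - (i:ℝ) := by linarith
          have h12 := mul_le_mul_of_nonneg_left hci hKi
          have h13 := mul_le_mul_of_nonneg_right h12 hp
          calc (((K:ℝ)+1) - (i:ℝ)) * |(c i:ℝ)| * ρ^i ≤ (((K:ℝ)+1) - (i:ℝ)) * 1 * ρ^i := h13
          _ = (((K:ℝ)+1) - (i:ℝ)) * ρ^i := by ring
    have h2 : ∑ i ∈ range (K+1), (((K:ℝ)+1) - (i:ℝ)) * ρ^i ≤ ρ^(K+2) * (1/(ρ-1)^2) := by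
      have hrefl := Finset.sum_range_reflect (fun i => (((K:ℝ)+1) - (i:ℝ)) * ρ^i) (K+1)
      rw [← hrefl]
      have hterm : ∀ j ∈ range (K+1), (((K:ℝ)+1) - ((K+1-1-j:ℕ):ℝ)) * ρ^(K+1-1-j)
          = ((j:ℝ)+1) * ρ^K * (1/ρ)^j := by
        intro j hj
        have hjK : j ≤ K := Nat.lt_succ_iff.mp (Finset.mem_range.mp hj)
        have h3 : (K+1-1-j) = K - j := by omega
        rw [h3]
        have h4 : ((K-j:ℕ):ℝ) = (K:ℝ) - (j:ℝ) := by
          rw [Nat.cast_sub hjK]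
        have h5 : ρ^(K-j) = ρ^K * (1/ρ)^j := by
          rw [one_div, inv_pow, ← div_eq_mul_inv, eq_div_iff (by positivity), ← pow_add]
          congr 1
          omega
        rw [h4, h5]
        ring
      rw [Finset.sum_congr rfl hterm]
      have h6 : ∑ j ∈ range (K+1), ((j:ℝ)+1) * ρ^K * (1/ρ)^j
          = ρ^K * ∑ j ∈ range (K+1), ((j:ℝ)+1) * (1/ρ)^j := by
        rw [Finset.mul_sum]
        apply Finset.sum_congr rfl
        intro j _
        ring
      rw [h6]
      have h7 : (0:ℝ) ≤ 1/ρ := by positivity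
      have h8 : 1/ρ < 1 := by rw [div_lt_one hρ0]; linarith
      have h9 := geo2 h7 h8 (K+1)
      have h10 : (0:ℝ) < ρ^K := pow_pos hρ0 K
      have h11 : 1/(1-1/ρ)^2 = ρ^2/(ρ-1)^2 := by
        rw [show (1-1/ρ) = (ρ-1)/ρ by field_simp]
        rw [div_pow, one_div_div]
      calc ρ^K * ∑ j ∈ range (K+1), ((j:ℝ)+1) * (1/ρ)^j ≤ ρ^K * (1/(1-1/ρ)^2) := by nlinarith
      _ = ρ^(K+2) * (1/(ρ-1)^2) := by rw [h11]; field_simp; ring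
    calc ρ^(K+2) * |SPdol (StQ q (K+1)) (-ρ)| = |(-ρ)^(K+2) * SPdol (StQ q (K+1)) (-ρ)| := by
          rw [abs_mul, abs_pow, abs_neg, abs_of_pos hρ0]
    _ ≤ ∑ i ∈ range (K+1), (((K:ℝ)+1) - (i:ℝ)) * ρ^i := h1
    _ ≤ ρ^(K+2) * (1/(ρ-1)^2) := h2
  have hpK : (0:ℝ) < ρ^(K+2) := pow_pos hρ0 (K+2)
  nlinarith [abs_nonneg (SPdol (StQ q (K+1)) (-ρ))]


lemma boundC1 (hc1 : ∀ i, |c i| ≤ 1) {α : ℂ} (hα : α^3 - α + 1 = 0)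
    (h0 : 0 < Complex.abs α) (h1 : Complex.abs α < 1) (d : ℕ)
    (hNs : ∑ i ∈ range (d+1), (c i:ℂ)*α^i = 0) (K : ℕ) (hK : K ≤ d+1) :
    Complex.abs (SPol (StQ q K) α) ≤ 1/(1 - Complex.abs α) := by
  set b := Complex.abs α with hb
  have hA := lemA q c hq hrec α hα K
  have hsplit := Finset.sum_range_add_sum_Ico (fun i => (c i:ℂ)*α^i) hK
  have h2 : α^K * SPol (StQ q K) α = ∑ i ∈ Ico K (d+1), (c i:ℂ)*α^i := by
    linear_combination hA - hsplit - hNs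
  have h3 : Complex.abs (α^K * SPol (StQ q K) α) ≤ ∑ i ∈ Ico K (d+1), b^i := by
    rw [h2]
    calc Complex.abs (∑ i ∈ Ico K (d+1), (c i:ℂ)*α^i)
        ≤ ∑ i ∈ Ico K (d+1), Complex.abs ((c i:ℂ)*α^i) := by
          exact AbsoluteValue.sum_le _ _ _
    _ ≤ ∑ i ∈ Ico K (d+1), b^i := by
        apply Finset.sum_le_sum
        intro i _
        rw [map_mul, map_pow]
        have hci : Complex.abs ((c i:ℂ)) ≤ 1 := by
          rw [Complex.abs_intCast]
          exact_mod_cast hc1 i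
        have hp : (0:ℝ) ≤ b^i := pow_nonneg h0.le i
        calc Complex.abs ((c i:ℂ)) * b^i ≤ 1 * b^i := mul_le_mul_of_nonneg_right hci hp
        _ = b^i := one_mul _
  have h4 : ∑ i ∈ Ico K (d+1), b^i ≤ b^K * (1/(1-b)) := by
    rw [Finset.sum_Ico_eq_sum_range]
    have h5 : ∀ i ∈ range (d+1-K), b^(K+i) = b^K * b^i := fun i _ => pow_add b K i
    rw [Finset.sum_congr rfl h5, ← Finset.mul_sum]
    have := geo1 h0.le h1 (d+1-K)
    nlinarith [pow_nonneg h0.le K]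
  rw [map_mul, map_pow] at h3
  have hpK : (0:ℝ) < b^K := pow_pos h0 K
  have h6 : b^K * Complex.abs (SPol (StQ q K) α) ≤ b^K * (1/(1-b)) := le_trans h3 h4
  exact le_of_mul_le_mul_left h6 hpK

lemma boundC2 (hc1 : ∀ i, |c i| ≤ 1) {α : ℂ} (hα : α^3 - α + 1 = 0)
    (h0 : 0 < Complex.abs α) (h1 : Complex.abs α < 1) (d : ℕ)
    (hNs : ∑ i ∈ range (d+1), (c i:ℂ)*α^i = 0)
    (hNds : ∑ j ∈ range d, ((j:ℂ)+1)*(c (j+1):ℂ)*α^j = 0)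
    (K : ℕ) (hK : K + 1 ≤ d) :
    Complex.abs (SPdol (StQ q (K+1)) α) ≤ 1/(1 - Complex.abs α)^2 := by
  set b := Complex.abs α with hb
  have hb1 : (0:ℝ) < 1 - b := by linarith
  have e1 := lemA q c hq hrec α hα (K+1)
  have e2 := lemC q c hq hrec α hα K
  have hs1 := Finset.sum_range_add_sum_Ico (fun j => ((j:ℂ)+1)*(c (j+1):ℂ)*α^j) (show K ≤ d by omega)
  have hs2 := Finset.sum_range_add_sum_Ico (fun i => (c i:ℂ)*α^i) (show K+1 ≤ d+1 by omega)
  -- α^(K+2) * SPdol = α * S1 - (K+1) * S2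
  have key : α^(K+2) * SPdol (StQ q (K+1)) α
      = α * ∑ j ∈ Ico K d, ((j:ℂ)+1)*(c (j+1):ℂ)*α^j
        - ((K:ℂ)+1) * ∑ i ∈ Ico (K+1) (d+1), (c i:ℂ)*α^i := by
    linear_combination α * e2 - α * hs1 - α * hNds
      - ((K:ℂ)+1) * e1 + ((K:ℂ)+1) * hs2 + ((K:ℂ)+1) * hNs
  have key2 : α^(K+2) * SPdol (StQ q (K+1)) α
      = ∑ m ∈ range (d-K), (m:ℂ) * (c (K+1+m):ℂ) * α^(K+1+m) := by
    rw [key, Finset.sum_Ico_eq_sum_range, Finset.sum_Ico_eq_sum_range]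
    rw [show d + 1 - (K+1) = d - K from by omega]
    rw [Finset.mul_sum, Finset.mul_sum, ← Finset.sum_sub_distrib]
    apply Finset.sum_congr rfl
    intro m _
    rw [show K + m + 1 = K + 1 + m from by omega]
    push_cast
    ring
  have h3 : b^(K+2) * Complex.abs (SPdol (StQ q (K+1)) α) ≤ b^(K+2) * (1/(1-b)^2) := by
    have h4 : Complex.abs (α^(K+2) * SPdol (StQ q (K+1)) α) ≤ ∑ m ∈ range (d-K), (m:ℝ) * b^(K+1+m) := by
      rw [key2]
      calc Complex.abs (∑ m ∈ range (d-K), (m:ℂ) * (c (K+1+m):ℂ) * α^(K+1+m))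
          ≤ ∑ m ∈ range (d-K), Complex.abs ((m:ℂ) * (c (K+1+m):ℂ) * α^(K+1+m)) :=
            AbsoluteValue.sum_le _ _ _
      _ ≤ ∑ m ∈ range (d-K), (m:ℝ) * b^(K+1+m) := by
          apply Finset.sum_le_sum
          intro m _
          rw [map_mul, map_mul, map_pow, Complex.abs_natCast]
          have hci : Complex.abs ((c (K+1+m):ℂ)) ≤ 1 := by
            rw [Complex.abs_intCast]; exact_mod_cast hc1 (K+1+m)
          have hp : (0:ℝ) ≤ b^(K+1+m) := pow_nonneg h0.le _
          have hm : (0:ℝ) ≤ (m:ℝ) := Nat.cast_nonneg m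
          calc (m:ℝ) * Complex.abs ((c (K+1+m):ℂ)) * b^(K+1+m)
              ≤ (m:ℝ) * 1 * b^(K+1+m) :=
                mul_le_mul_of_nonneg_right (mul_le_mul_of_nonneg_left hci hm) hp
          _ = (m:ℝ) * b^(K+1+m) := by ring
    have h5 : ∑ m ∈ range (d-K), (m:ℝ) * b^(K+1+m) ≤ b^(K+2) * (1/(1-b)^2) := by
      rcases Nat.eq_zero_or_pos (d-K) with hdk | hdk
      · rw [hdk]
        simp only [Finset.range_zero, Finset.sum_empty]
        positivity
      · obtain ⟨M, hM⟩ : ∃ M, d - K = M + 1 := ⟨d-K-1, by omega⟩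
        rw [hM, Finset.sum_range_succ' (fun m => (m:ℝ) * b^(K+1+m)) M]
        simp only [Nat.cast_zero, zero_mul, add_zero]
        have h6 : ∀ m ∈ range M, ((m+1:ℕ):ℝ) * b^(K+1+(m+1)) = ((m:ℝ)+1) * b^m * b^(K+2) := by
          intro m _
          have : K+1+(m+1) = m + (K+2) := by omega
          rw [this, pow_add]
          push_cast
          ring
        rw [Finset.sum_congr rfl h6, ← Finset.sum_mul]
        have h8 := geo2 h0.le h1 M
        nlinarith [pow_nonneg h0.le (K+2)]
    calc b^(K+2) * Complex.abs (SPdol (StQ q (K+1)) α)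
        = Complex.abs (α^(K+2) * SPdol (StQ q (K+1)) α) := by rw [map_mul, map_pow]
    _ ≤ ∑ m ∈ range (d-K), (m:ℝ) * b^(K+1+m) := h4
    _ ≤ b^(K+2) * (1/(1-b)^2) := h5
  exact le_of_mul_le_mul_left h3 (pow_pos h0 (K+2))

end Main


lemma real_mm {x L U T : ℝ} (h1 : L ≤ T) (h2 : T ≤ U) :
    min (x*L) (x*U) ≤ x*T ∧ x*T ≤ max (x*L) (x*U) := by
  rcases le_or_gt 0 x with hx | hx
  · exact ⟨le_trans (min_le_left _ _) (mul_le_mul_of_nonneg_left h1 hx),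
      le_trans (mul_le_mul_of_nonneg_left h2 hx) (le_max_right _ _)⟩
  · exact ⟨le_trans (min_le_right _ _) (mul_le_mul_of_nonpos_left h2 hx.le),
      le_trans (mul_le_mul_of_nonpos_left h1 hx.le) (le_max_left _ _)⟩

lemma linform_cond {ρ : ℝ} (hρl : (1.324717:ℝ) ≤ ρ) (hρu : ρ ≤ (1.324718:ℝ))
    (x0 x1 x2 : ℤ) (Br : ℝ) (Bi : ℤ)
    (hb : |(x0:ℝ) + (x1:ℝ)*ρ + (x2:ℝ)*ρ^2| ≤ Br) (hBB : Br * 10^12 ≤ (Bi:ℝ)) :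
    (x0*10^12 + 10^6 * min (x1*1324717) (x1*1324718) + min (x2*1324717^2) (x2*1324718^2) ≤ Bi)
    ∧ (-Bi ≤ x0*10^12 + 10^6 * max (x1*1324717) (x1*1324718) + max (x2*1324717^2) (x2*1324718^2)) := by
  have hρ0 : (0:ℝ) < ρ := by linarith
  have h1 := real_mm (x := (x1:ℝ)) (L := (1324717:ℝ)) (U := (1324718:ℝ)) (T := ρ * 10^6) (by linarith) (by linarith)
  have h2 := real_mm (x := (x2:ℝ)) (T := (ρ * 10^6)^2) (L := (1754875130089:ℝ)) (U := (1754877779524:ℝ))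
    (by nlinarith) (by nlinarith)
  obtain ⟨hbu, hbl⟩ := abs_le.mp hb
  norm_num at hBB
  constructor
  · have hr : ((x0*10^12 + 10^6 * min (x1*1324717) (x1*1324718) + min (x2*1324717^2) (x2*1324718^2) : ℤ):ℝ) ≤ (Bi:ℝ) := by
      push_cast [Int.cast_min, Int.cast_max]
      linarith [h1.1, h2.1, hbl, hBB]
    exact_mod_cast hr
  · have hr : (-Bi : ℝ) ≤ ((x0*10^12 + 10^6 * max (x1*1324717) (x1*1324718) + max (x2*1324717^2) (x2*1324718^2) : ℤ):ℝ) := by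
      push_cast [Int.cast_min, Int.cast_max]
      linarith [h1.2, h2.2, hbu, hBB]
    exact_mod_cast hr

lemma rcheck_of_bounds {ρ : ℝ} (hρl : (1.324717:ℝ) ≤ ρ) (hρu : ρ ≤ (1.324718:ℝ))
    (hρ3 : ρ^3 = ρ + 1) {β γ : ℂ}
    (hquadβ : β^2 = (ρ:ℂ)*β - (ρ:ℂ)^2 + 1) (hquadγ : γ^2 = (ρ:ℂ)*γ - (ρ:ℂ)^2 + 1)
    (hsum : β + γ = (ρ:ℂ)) (hprod : β*γ = (ρ:ℂ)^2 - 1)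
    (st : S6)
    (hb1 : |SPol st (-ρ)| ≤ 3.08)
    (hb2 : |SPdol st (-ρ)| ≤ 9.485)
    (hb3 : Complex.abs (SPol st β * SPol st γ) ≤ 58.3)
    (hb4 : Complex.abs (SPdol st β * SPdol st γ) ≤ 3420) :
    Rcheck st := by
  obtain ⟨t1,t2,t3,t4,t5,t6⟩ := st
  have hρ3' : ρ^3 - ρ - 1 = 0 := by linarith
  have hρ3C : ((ρ:ℂ))^3 = (ρ:ℂ) + 1 := by exact_mod_cast congrArg (fun x : ℝ => (x:ℂ)) hρ3
  have e1 : SPol ((t1,t2,t3,t4,t5,t6):S6) (-ρ)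
      = ((-t6 + t5 + t4 + (-2)*t3 + t1:ℤ):ℝ) + ((-t5 + t4 - t2:ℤ):ℝ)*ρ + ((t6 - t5 + t3:ℤ):ℝ)*ρ^2 := by
    simp only [SPol]
    push_cast
    linear_combination ((t6:ℝ) - (t6:ℝ)*ρ^2 + (t5:ℝ)*ρ - (t4:ℝ)) * hρ3'
  have e2 : SPdol ((t1,t2,t3,t4,t5,t6):S6) (-ρ)
      = ((t6 + (-2)*t5 + (-2)*t4 + t2:ℤ):ℝ) + ((t6 + (-2)*t3:ℤ):ℝ)*ρ + ((-t6 + (3)*t4:ℤ):ℝ)*ρ^2 := by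
    simp only [SPdol]
    push_cast
    linear_combination ((5)*(t6:ℝ)*ρ + (-4)*(t5:ℝ)) * hρ3'
  have e5β : SPol ((t1,t2,t3,t4,t5,t6):S6) β = (((-2)*(t6:ℂ)*(ρ:ℂ)^2 - (t6:ℂ)*(ρ:ℂ)^3 + (t6:ℂ)*(ρ:ℂ)^5 + (t5:ℂ)*(ρ:ℂ)^2 + (2)*(t4:ℂ) + (t4:ℂ)*(ρ:ℂ) - (t4:ℂ)*(ρ:ℂ)^3 - (t3:ℂ) - (t3:ℂ)*(ρ:ℂ)^2 + (t1:ℂ)) : ℂ) + (((2)*(t6:ℂ)*(ρ:ℂ) + (t6:ℂ)*(ρ:ℂ)^2 - (t6:ℂ)*(ρ:ℂ)^4 + (2)*(t5:ℂ) - (t5:ℂ)*(ρ:ℂ)^3 - (t4:ℂ) + (t3:ℂ)*(ρ:ℂ) + (t2:ℂ)) : ℂ)*β := by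
    simp only [SPol]
    linear_combination ((2)*(t6:ℂ) - (t6:ℂ)*β + (t6:ℂ)*β^3 + (t6:ℂ)*(ρ:ℂ)*β^2 - (t6:ℂ)*(ρ:ℂ)^3 - (t5:ℂ) + (t5:ℂ)*β^2 + (t5:ℂ)*(ρ:ℂ)*β + (t4:ℂ)*β + (t4:ℂ)*(ρ:ℂ) + (t3:ℂ)) * hquadβ
  have e5γ : SPol ((t1,t2,t3,t4,t5,t6):S6) γ = (((-2)*(t6:ℂ)*(ρ:ℂ)^2 - (t6:ℂ)*(ρ:ℂ)^3 + (t6:ℂ)*(ρ:ℂ)^5 + (t5:ℂ)*(ρ:ℂ)^2 + (2)*(t4:ℂ) + (t4:ℂ)*(ρ:ℂ) - (t4:ℂ)*(ρ:ℂ)^3 - (t3:ℂ) - (t3:ℂ)*(ρ:ℂ)^2 + (t1:ℂ)) : ℂ) + (((2)*(t6:ℂ)*(ρ:ℂ) + (t6:ℂ)*(ρ:ℂ)^2 - (t6:ℂ)*(ρ:ℂ)^4 + (2)*(t5:ℂ) - (t5:ℂ)*(ρ:ℂ)^3 - (t4:ℂ) + (t3:ℂ)*(ρ:ℂ) + (t2:ℂ))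 : ℂ)*γ := by
    simp only [SPol]
    linear_combination ((2)*(t6:ℂ) - (t6:ℂ)*γ + (t6:ℂ)*γ^3 + (t6:ℂ)*(ρ:ℂ)*γ^2 - (t6:ℂ)*(ρ:ℂ)^3 - (t5:ℂ) + (t5:ℂ)*γ^2 + (t5:ℂ)*(ρ:ℂ)*γ + (t4:ℂ)*γ + (t4:ℂ)*(ρ:ℂ) + (t3:ℂ)) * hquadγ
  have e6β : SPdol ((t1,t2,t3,t4,t5,t6):S6) β = (((t6:ℂ)*(ρ:ℂ)^2 + (2)*(t5:ℂ) + (4)*(t5:ℂ)*(ρ:ℂ) + (-4)*(t5:ℂ)*(ρ:ℂ)^3 + (t4:ℂ) + (-3)*(t4:ℂ)*(ρ:ℂ)^2 + (t2:ℂ)) : ℂ) + (((4)*(t6:ℂ) + (4)*(t6:ℂ)*(ρ:ℂ) + (-5)*(t6:ℂ)*(ρ:ℂ)^3 + (3)*(t4:ℂ)*(ρ:ℂ) + (2)*(t3:ℂ)) : ℂ)*β := by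
    simp only [SPdol]
    linear_combination (-(t6:ℂ) + (5)*(t6:ℂ)*β^2 + (5)*(t6:ℂ)*(ρ:ℂ)*β + (4)*(t5:ℂ)*β + (4)*(t5:ℂ)*(ρ:ℂ) + (3)*(t4:ℂ)) * hquadβ
  have e6γ : SPdol ((t1,t2,t3,t4,t5,t6):S6) γ = (((t6:ℂ)*(ρ:ℂ)^2 + (2)*(t5:ℂ) + (4)*(t5:ℂ)*(ρ:ℂ) + (-4)*(t5:ℂ)*(ρ:ℂ)^3 + (t4:ℂ) + (-3)*(t4:ℂ)*(ρ:ℂ)^2 + (t2:ℂ)) : ℂ) + (((4)*(t6:ℂ) + (4)*(t6:ℂ)*(ρ:ℂ) + (-5)*(t6:ℂ)*(ρ:ℂ)^3 + (3)*(t4:ℂ)*(ρ:ℂ) + (2)*(t3:ℂ)) : ℂ)*γ := by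
    simp only [SPdol]
    linear_combination (-(t6:ℂ) + (5)*(t6:ℂ)*γ^2 + (5)*(t6:ℂ)*(ρ:ℂ)*γ + (4)*(t5:ℂ)*γ + (4)*(t5:ℂ)*(ρ:ℂ) + (3)*(t4:ℂ)) * hquadγ
  have ey : SPol ((t1,t2,t3,t4,t5,t6):S6) β * SPol ((t1,t2,t3,t4,t5,t6):S6) γ
      = (((t5*t6 + (-2)*t5^2 - t4*t6 + (3)*t4*t5 + t3*t5 + (-3)*t3*t4 + t3^2 + t2*t6 + (-3)*t2*t5 + (2)*t2*t4 + t2*t3 - t2^2 + (2)*t1*t4 + (-2)*t1*t3 + t1^2:ℤ):ℂ)) + (((t6^2 + (-3)*t5*t6 + (2)*t5^2 + t4*t6 - t4^2 + (2)*t3*t6 + (-4)*t3*t5 + (2)*t3*t4 + t3^2 - t2*t6 + t2*t5 + t2*t4 + (-2)*t2*t3 + t1*t5 - t1*t4 + t1*t2:ℤ):ℂ))*(ρ:ℂ) + (((t5^2 - t4*t6 - t4*t5 + t4^2 + t3*t6 - t3*t5 - t3*t4 + t3^2 + (2)*t2*t5 + (-2)*t2*t4 + t2^2 - t1*t6 +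 t1*t5 - t1*t3:ℤ):ℂ))*(ρ:ℂ)^2 := by
    rw [e5β, e5γ]
    push_cast
    linear_combination (((-2)*(t6:ℂ)*(ρ:ℂ)^2 - (t6:ℂ)*(ρ:ℂ)^3 + (t6:ℂ)*(ρ:ℂ)^5 + (t5:ℂ)*(ρ:ℂ)^2 + (2)*(t4:ℂ) + (t4:ℂ)*(ρ:ℂ) - (t4:ℂ)*(ρ:ℂ)^3 - (t3:ℂ) - (t3:ℂ)*(ρ:ℂ)^2 + (t1:ℂ))*((2)*(t6:ℂ)*(ρ:ℂ) + (t6:ℂ)*(ρ:ℂ)^2 - (t6:ℂ)*(ρ:ℂ)^4 + (2)*(t5:ℂ) - (t5:ℂ)*(ρ:ℂ)^3 - (t4:ℂ) + (t3:ℂ)*(ρ:ℂ) + (t2:ℂ)) : ℂ) * hsum + (((2)*(t6:ℂ)*(ρ:ℂ) + (t6:ℂ)*(ρ:ℂ)^2 - (t6:ℂ)*(ρ:ℂ)^4 + (2)*(t5:ℂ) - (t5:ℂ)*(ρ:ℂ)^3 - (t4:ℂ) + (t3:ℂ)*(ρ:ℂ) + (t2:ℂ))^2 : ℂ) * hpr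od
      + ((t6:ℂ)^2*(ρ:ℂ) + (3)*(t6:ℂ)^2*(ρ:ℂ)^2 + (t6:ℂ)^2*(ρ:ℂ)^3 + (-3)*(t6:ℂ)^2*(ρ:ℂ)^4 + (-2)*(t6:ℂ)^2*(ρ:ℂ)^5 + (t6:ℂ)^2*(ρ:ℂ)^7 + (t5:ℂ)*(t6:ℂ) + (4)*(t5:ℂ)*(t6:ℂ)*(ρ:ℂ) + (-3)*(t5:ℂ)*(t6:ℂ)*(ρ:ℂ)^3 - (t5:ℂ)*(t6:ℂ)*(ρ:ℂ)^4 + (t5:ℂ)*(t6:ℂ)*(ρ:ℂ)^6 + (2)*(t5:ℂ)^2 + (-3)*(t5:ℂ)^2*(ρ:ℂ)^2 - (t5:ℂ)^2*(ρ:ℂ)^3 + (t5:ℂ)^2*(ρ:ℂ)^5 - (t4:ℂ)*(t6:ℂ) + (-2)*(t4:ℂ)*(t6:ℂ)*(ρ:ℂ) + (3)*(t4:ℂ)*(t6:ℂ)*(ρ:ℂ)^2 + (2)*(t4:ℂ)*(t6:ℂ)*(ρ:ℂ)^3 - (t4:ℂ)*(t6:ℂ)*(ρ:ℂ)^5 -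 (t4:ℂ)*(t5:ℂ) + (-3)*(t4:ℂ)*(t5:ℂ)*(ρ:ℂ) + (t4:ℂ)*(t5:ℂ)*(ρ:ℂ)^4 + (-3)*(t4:ℂ)^2 + (t4:ℂ)^2*(ρ:ℂ)^3 + (2)*(t3:ℂ)*(t6:ℂ)*(ρ:ℂ) + (t3:ℂ)*(t6:ℂ)*(ρ:ℂ)^2 + (-2)*(t3:ℂ)*(t6:ℂ)*(ρ:ℂ)^4 + (t3:ℂ)*(t5:ℂ) + (t3:ℂ)*(t5:ℂ)*(ρ:ℂ) - (t3:ℂ)*(t5:ℂ)*(ρ:ℂ)^3 + (t3:ℂ)*(t4:ℂ) + (t3:ℂ)*(t4:ℂ)*(ρ:ℂ)^2 + (t3:ℂ)^2*(ρ:ℂ) + (t2:ℂ)*(t6:ℂ) + (2)*(t2:ℂ)*(t6:ℂ)*(ρ:ℂ) - (t2:ℂ)*(t6:ℂ)*(ρ:ℂ)^3 + (t2:ℂ)*(t5:ℂ) + (-2)*(t2:ℂ)*(t5:ℂ)*(ρ:ℂ)^2 - (t2:ℂ)*(t4:ℂ)*(ρ:ℂ) + (t2:ℂ)*(t3:ℂ)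 + (t1:ℂ)*(t6:ℂ)*(ρ:ℂ)^2 - (t1:ℂ)*(t5:ℂ)*(ρ:ℂ) + (-2)*(t1:ℂ)*(t4:ℂ)) * hρ3C
  have eyd : SPdol ((t1,t2,t3,t4,t5,t6):S6) β * SPdol ((t1,t2,t3,t4,t5,t6):S6) γ
      = ((((4)*t5^2 + (-3)*t4*t6 + (-4)*t4*t5 + t4^2 + (2)*t3*t6 + (6)*t3*t4 + (-4)*t3^2 + (-4)*t2*t5 + (2)*t2*t4 + t2^2:ℤ):ℂ)) + ((((2)*t5*t6 + (-4)*t4*t6 + (9)*t4^2 + (2)*t3*t6 + (-4)*t3*t5 + (-4)*t3*t4 - t2*t6 + (2)*t2*t3:ℤ):ℂ))*(ρ:ℂ) + (((t6^2 + (-2)*t5*t6 + t4*t6 + (6)*t4*t5 + (-3)*t4^2 + (-4)*t3*t6 + (4)*t3^2 + t2*t6 + (-3)*t2*t4:ℤ):ℂ))*(ρ:ℂ)^2 := by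
    rw [e6β, e6γ]
    push_cast
    linear_combination (((t6:ℂ)*(ρ:ℂ)^2 + (2)*(t5:ℂ) + (4)*(t5:ℂ)*(ρ:ℂ) + (-4)*(t5:ℂ)*(ρ:ℂ)^3 + (t4:ℂ) + (-3)*(t4:ℂ)*(ρ:ℂ)^2 + (t2:ℂ))*((4)*(t6:ℂ) + (4)*(t6:ℂ)*(ρ:ℂ) + (-5)*(t6:ℂ)*(ρ:ℂ)^3 + (3)*(t4:ℂ)*(ρ:ℂ) + (2)*(t3:ℂ)) : ℂ) * hsum + (((4)*(t6:ℂ) + (4)*(t6:ℂ)*(ρ:ℂ) + (-5)*(t6:ℂ)*(ρ:ℂ)^3 + (3)*(t4:ℂ)*(ρ:ℂ) + (2)*(t3:ℂ))^2 : ℂ) * hprod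
      + ((16)*(t6:ℂ)^2 + (16)*(t6:ℂ)^2*(ρ:ℂ) + (-15)*(t6:ℂ)^2*(ρ:ℂ)^2 + (-45)*(t6:ℂ)^2*(ρ:ℂ)^3 + (25)*(t6:ℂ)^2*(ρ:ℂ)^5 + (-6)*(t5:ℂ)*(t6:ℂ)*(ρ:ℂ) + (-24)*(t5:ℂ)*(t6:ℂ)*(ρ:ℂ)^2 + (20)*(t5:ℂ)*(t6:ℂ)*(ρ:ℂ)^4 + (-16)*(t5:ℂ)^2*(ρ:ℂ) + (16)*(t5:ℂ)^2*(ρ:ℂ)^3 + (-3)*(t4:ℂ)*(t6:ℂ) + (19)*(t4:ℂ)*(t6:ℂ)*(ρ:ℂ) + (-15)*(t4:ℂ)*(t6:ℂ)*(ρ:ℂ)^3 + (-8)*(t4:ℂ)*(t5:ℂ) + (12)*(t4:ℂ)*(t5:ℂ)*(ρ:ℂ)^2 + (9)*(t4:ℂ)^2*(ρ:ℂ) + (18)*(t3:ℂ)*(t6:ℂ) + (-20)*(t3:ℂ)*(t6:ℂ)*(ρ:ℂ)^2 + (-8)*(t3:ℂ)*(t5:ℂ)*(ρ:ℂ) + (6)*(t3:ℂ)*(t4:ℂ)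 + (-5)*(t2:ℂ)*(t6:ℂ)*(ρ:ℂ) + (-8)*(t2:ℂ)*(t5:ℂ)) * hρ3C
  have hy : |(((t5*t6 + (-2)*t5^2 - t4*t6 + (3)*t4*t5 + t3*t5 + (-3)*t3*t4 + t3^2 + t2*t6 + (-3)*t2*t5 + (2)*t2*t4 + t2*t3 - t2^2 + (2)*t1*t4 + (-2)*t1*t3 + t1^2:ℤ):ℝ)) + (((t6^2 + (-3)*t5*t6 + (2)*t5^2 + t4*t6 - t4^2 + (2)*t3*t6 + (-4)*t3*t5 + (2)*t3*t4 + t3^2 - t2*t6 + t2*t5 + t2*t4 + (-2)*t2*t3 + t1*t5 - t1*t4 + t1*t2:ℤ):ℝ))*ρ + (((t5^2 - t4*t6 - t4*t5 + t4^2 + t3*t6 - t3*t5 - t3*t4 + t3^2 + (2)*t2*t5 + (-2)*t2*t4 + t2^2 - t1*t6 + t1*t5 - t1*t3:ℤ):ℝ))*ρ^2| ≤ 58.3 := by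
    have hcast : ((((((t5*t6 + (-2)*t5^2 - t4*t6 + (3)*t4*t5 + t3*t5 + (-3)*t3*t4 + t3^2 + t2*t6 + (-3)*t2*t5 + (2)*t2*t4 + t2*t3 - t2^2 + (2)*t1*t4 + (-2)*t1*t3 + t1^2:ℤ):ℝ)) + (((t6^2 + (-3)*t5*t6 + (2)*t5^2 + t4*t6 - t4^2 + (2)*t3*t6 + (-4)*t3*t5 + (2)*t3*t4 + t3^2 - t2*t6 + t2*t5 + t2*t4 + (-2)*t2*t3 + t1*t5 - t1*t4 + t1*t2:ℤ):ℝ))*ρ + (((t5^2 - t4*t6 - t4*t5 + t4^2 + t3*t6 - t3*t5 - t3*t4 + t3^2 + (2)*t2*t5 + (-2)*t2*t4 + t2^2 - t1*t6 + t1*t5 - t1*t3:ℤ):ℝ))*ρ^2 : ℝ)):ℂ)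
        = SPol ((t1,t2,t3,t4,t5,t6):S6) β * SPol ((t1,t2,t3,t4,t5,t6):S6) γ := by
      rw [ey]; push_cast; ring
    calc |(((t5*t6 + (-2)*t5^2 - t4*t6 + (3)*t4*t5 + t3*t5 + (-3)*t3*t4 + t3^2 + t2*t6 + (-3)*t2*t5 + (2)*t2*t4 + t2*t3 - t2^2 + (2)*t1*t4 + (-2)*t1*t3 + t1^2:ℤ):ℝ)) + (((t6^2 + (-3)*t5*t6 + (2)*t5^2 + t4*t6 - t4^2 + (2)*t3*t6 + (-4)*t3*t5 + (2)*t3*t4 + t3^2 - t2*t6 + t2*t5 + t2*t4 + (-2)*t2*t3 + t1*t5 - t1*t4 + t1*t2:ℤ):ℝ))*ρ + (((t5^2 - t4*t6 - t4*t5 + t4^2 + t3*t6 - t3*t5 - t3*t4 + t3^2 + (2)*t2*t5 + (-2)*t2*t4 + t2^2 - t1*t6 + t1*t5 - t1*t3:ℤ):ℝ))*ρ^2|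
        = Complex.abs (((((((t5*t6 + (-2)*t5^2 - t4*t6 + (3)*t4*t5 + t3*t5 + (-3)*t3*t4 + t3^2 + t2*t6 + (-3)*t2*t5 + (2)*t2*t4 + t2*t3 - t2^2 + (2)*t1*t4 + (-2)*t1*t3 + t1^2:ℤ):ℝ)) + (((t6^2 + (-3)*t5*t6 + (2)*t5^2 + t4*t6 - t4^2 + (2)*t3*t6 + (-4)*t3*t5 + (2)*t3*t4 + t3^2 - t2*t6 + t2*t5 + t2*t4 + (-2)*t2*t3 + t1*t5 - t1*t4 + t1*t2:ℤ):ℝ))*ρ + (((t5^2 - t4*t6 - t4*t5 + t4^2 + t3*t6 - t3*t5 - t3*t4 + t3^2 + (2)*t2*t5 + (-2)*t2*t4 + t2^2 - t1*t6 + t1*t5 - t1*t3:ℤ):ℝ))*ρ^2 : ℝ)):ℂ)) :=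
          (Complex.abs_ofReal _).symm
    _ ≤ 58.3 := by rw [hcast]; exact hb3
  have hyd : |((((4)*t5^2 + (-3)*t4*t6 + (-4)*t4*t5 + t4^2 + (2)*t3*t6 + (6)*t3*t4 + (-4)*t3^2 + (-4)*t2*t5 + (2)*t2*t4 + t2^2:ℤ):ℝ)) + ((((2)*t5*t6 + (-4)*t4*t6 + (9)*t4^2 + (2)*t3*t6 + (-4)*t3*t5 + (-4)*t3*t4 - t2*t6 + (2)*t2*t3:ℤ):ℝ))*ρ + (((t6^2 + (-2)*t5*t6 + t4*t6 + (6)*t4*t5 + (-3)*t4^2 + (-4)*t3*t6 + (4)*t3^2 + t2*t6 + (-3)*t2*t4:ℤ):ℝ))*ρ^2| ≤ 3420 := by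
    have hcast : (((((((4)*t5^2 + (-3)*t4*t6 + (-4)*t4*t5 + t4^2 + (2)*t3*t6 + (6)*t3*t4 + (-4)*t3^2 + (-4)*t2*t5 + (2)*t2*t4 + t2^2:ℤ):ℝ)) + ((((2)*t5*t6 + (-4)*t4*t6 + (9)*t4^2 + (2)*t3*t6 + (-4)*t3*t5 + (-4)*t3*t4 - t2*t6 + (2)*t2*t3:ℤ):ℝ))*ρ + (((t6^2 + (-2)*t5*t6 + t4*t6 + (6)*t4*t5 + (-3)*t4^2 + (-4)*t3*t6 + (4)*t3^2 + t2*t6 + (-3)*t2*t4:ℤ):ℝ))*ρ^2 : ℝ)):ℂ)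
        = SPdol ((t1,t2,t3,t4,t5,t6):S6) β * SPdol ((t1,t2,t3,t4,t5,t6):S6) γ := by
      rw [eyd]; push_cast; ring
    calc |((((4)*t5^2 + (-3)*t4*t6 + (-4)*t4*t5 + t4^2 + (2)*t3*t6 + (6)*t3*t4 + (-4)*t3^2 + (-4)*t2*t5 + (2)*t2*t4 + t2^2:ℤ):ℝ)) + ((((2)*t5*t6 + (-4)*t4*t6 + (9)*t4^2 + (2)*t3*t6 + (-4)*t3*t5 + (-4)*t3*t4 - t2*t6 + (2)*t2*t3:ℤ):ℝ))*ρ + (((t6^2 + (-2)*t5*t6 + t4*t6 + (6)*t4*t5 + (-3)*t4^2 + (-4)*t3*t6 + (4)*t3^2 + t2*t6 + (-3)*t2*t4:ℤ):ℝ))*ρ^2|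
        = Complex.abs ((((((((4)*t5^2 + (-3)*t4*t6 + (-4)*t4*t5 + t4^2 + (2)*t3*t6 + (6)*t3*t4 + (-4)*t3^2 + (-4)*t2*t5 + (2)*t2*t4 + t2^2:ℤ):ℝ)) + ((((2)*t5*t6 + (-4)*t4*t6 + (9)*t4^2 + (2)*t3*t6 + (-4)*t3*t5 + (-4)*t3*t4 - t2*t6 + (2)*t2*t3:ℤ):ℝ))*ρ + (((t6^2 + (-2)*t5*t6 + t4*t6 + (6)*t4*t5 + (-3)*t4^2 + (-4)*t3*t6 + (4)*t3^2 + t2*t6 + (-3)*t2*t4:ℤ):ℝ))*ρ^2 : ℝ)):ℂ)) :=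
          (Complex.abs_ofReal _).symm
    _ ≤ 3420 := by rw [hcast]; exact hb4
  rw [e1] at hb1
  rw [e2] at hb2
  have c1 := linform_cond hρl hρu _ _ _ _ 3080000000000 hb1 (by norm_num)
  have c2 := linform_cond hρl hρu _ _ _ _ 9485000000000 hb2 (by norm_num)
  have c3 := linform_cond hρl hρu _ _ _ _ 58300000000000 hy (by norm_num)
  have c4 := linform_cond hρl hρu _ _ _ _ 3420000000000000 hyd (by norm_num)
  show RcheckB _ _ _ _ _ _ = true
  simp only [RcheckB, Bool.and_eq_true, decide_eq_true_eq]
  refine ⟨⟨⟨⟨⟨⟨⟨?_, ?_⟩, ?_⟩, ?_⟩, ?_⟩, ?_⟩, ?_⟩, ?_⟩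
  · exact c1.1
  · exact c1.2
  · exact c2.1
  · exact c2.2
  · exact c3.1
  · exact c3.2
  · exact c4.1
  · exact c4.2

def pat27 : ℕ → ℤ
  | 0 => 1
  | 1 => -1
  | 2 => 1
  | 3 => 1
  | 4 => -1
  | 5 => 1
  | 6 => 1
  | 7 => 1
  | 8 => -1
  | 9 => -1
  | 10 => 1
  | 11 => 1
  | 12 => -1
  | 13 => -1
  | 14 => 1
  | 15 => 1
  | 16 => -1
  | 17 => 1
  | 18 => -1
  | 19 => 1
  | 20 => 1
  | 21 => -1
  | 22 => -1
  | 23 => -1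
  | 24 => -1
  | 25 => -1
  | 26 => 1
  | 27 => 1
  | _ => 0

def patQ : ℕ → ℤ
  | 0 => 1
  | 1 => 1
  | 2 => 2
  | 3 => 2
  | 4 => 1
  | 5 => -1
  | 6 => -3
  | 7 => -3
  | 8 => -2
  | 9 => 0
  | 10 => 2
  | 11 => 4
  | 12 => 4
  | 13 => 2
  | 14 => -1
  | 15 => -3
  | 16 => -4
  | 17 => -2
  | 18 => -1
  | 19 => 1
  | 20 => 1
  | 21 => 1
  | 22 => 0
  | 23 => 0
  | 24 => 0
  | 25 => 0
  | 26 => 0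
  | 27 => 0
  | _ => 0


def aL (i : ℕ) : ℤ := pat27 (i % 28)
def bL (i : ℕ) : ℤ := patQ (i % 28)

noncomputable def Lpoly : Polynomial ℤ := ∑ i ∈ range 196, C (aL i) * X ^ i
noncomputable def QLpoly : Polynomial ℤ := ∑ i ∈ range 190, C (bL i) * X ^ i

lemma coeff_sum_CX (n : ℕ) (f : ℕ → ℤ) (k : ℕ) :
    (∑ i ∈ range n, C (f i) * X ^ i).coeff k = if k < n then f k else 0 := by
  rw [finset_sum_coeff]
  simp only [coeff_C_mul, coeff_X_pow, mul_ite, mul_one, mul_zero]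
  rw [Finset.sum_ite_eq (range n) k f]
  simp [Finset.mem_range]

lemma coeff_Lpoly (k : ℕ) : Lpoly.coeff k = if k < 196 then aL k else 0 := coeff_sum_CX _ _ _
lemma coeff_QLpoly (k : ℕ) : QLpoly.coeff k = if k < 190 then bL k else 0 := coeff_sum_CX _ _ _

set_option maxRecDepth 10000 in
lemma key_id : ((X:Polynomial ℤ) ^ 3 - X + 1) ^ 2 * QLpoly = Lpoly := by
  have h : ((X:Polynomial ℤ) ^ 3 - X + 1) ^ 2 * QLpoly =
      QLpoly * X ^ 6 - 2 * (QLpoly * X ^ 4) + 2 * (QLpoly * X ^ 3) + QLpoly * X ^ 2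
        - 2 * (QLpoly * X ^ 1) + QLpoly := by ring
  rw [h]
  ext k
  simp only [coeff_sub, coeff_add, coeff_ofNat_mul, coeff_mul_X_pow', coeff_Lpoly, coeff_QLpoly]
  rcases lt_or_ge k 202 with hk | hk
  · revert hk
    revert k
    have : ∀ k < 202,
        (if 6 ≤ k then if k - 6 < 190 then bL (k-6) else 0 else 0)
        - 2 * (if 4 ≤ k then if k - 4 < 190 then bL (k-4) else 0 else 0)
        + 2 * (if 3 ≤ k then if k - 3 < 190 then bL (k-3) else 0 else 0)
        + (if 2 ≤ k then if k - 2 < 190 then bL (k-2) else 0 else 0)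
        - 2 * (if 1 ≤ k then if k - 1 < 190 then bL (k-1) else 0 else 0)
        + (if k < 190 then bL k else 0)
        = (if k < 196 then aL k else 0) := by decide
    exact this
  · rw [if_pos (show 6 ≤ k by omega), if_pos (show 4 ≤ k by omega),
      if_pos (show 3 ≤ k by omega), if_pos (show 2 ≤ k by omega),
      if_pos (show 1 ≤ k by omega), if_neg (show ¬ k - 6 < 190 by omega),
      if_neg (show ¬ k - 4 < 190 by omega), if_neg (show ¬ k - 3 < 190 by omega),
      if_neg (show ¬ k - 2 < 190 by omega), if_neg (show ¬ k - 1 < 190 by omega),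
      if_neg (show ¬ k < 190 by omega), if_neg (show ¬ k < 196 by omega)]
    ring

lemma natDegree_Lpoly : Lpoly.natDegree = 195 := by
  apply le_antisymm
  · rw [Polynomial.natDegree_le_iff_coeff_eq_zero]
    intro k hk
    rw [coeff_Lpoly, if_neg (by omega)]
  · apply Polynomial.le_natDegree_of_ne_zero
    rw [coeff_Lpoly, if_pos (by omega)]
    decide

set_option maxRecDepth 10000 in
lemma littlewood_Lpoly : ∀ i ≤ 195, Lpoly.coeff i ∈ ({-1, 1} : Set ℤ) := by
  intro i hi
  rw [coeff_Lpoly, if_pos (by omega)]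
  have h : ∀ j < 196, aL j = -1 ∨ aL j = 1 := by decide
  rcases h i (by omega) with h' | h' <;> rw [h'] <;> simp


set_option maxHeartbeats 4000000 in
theorem square_littlewood_not_newman :
    (∃ L : Polynomial ℤ, IsLittlewood L ∧ L.natDegree = 195 ∧
      ((X ^ 3 - X + 1 : Polynomial ℤ) ^ 2) ∣ L) ∧
    ¬ ∃ N : Polynomial ℤ, IsNewman N ∧ ((X ^ 3 - X + 1 : Polynomial ℤ) ^ 2) ∣ N := by
  constructor
  · refine ⟨Lpoly, ?_, natDegree_Lpoly, ⟨QLpoly, key_id.symm⟩⟩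
    intro i hi
    rw [natDegree_Lpoly] at hi
    exact littlewood_Lpoly i hi
  · rintro ⟨N, ⟨hN01, hN0⟩, Q, hNQ⟩
    -- basic structure
    have hNne : N ≠ 0 := fun h => by simp [h] at hN0
    have hQne : Q ≠ 0 := fun h => by rw [h, mul_zero] at hNQ; exact hNne hNQ
    have hF3 : ((X:Polynomial ℤ)^3 - X + 1).natDegree = 3 := by compute_degree!
    have hFne : ((X:Polynomial ℤ)^3 - X + 1) ≠ 0 := fun h => by simp [h] at hF3
    set d := N.natDegree with hd
    have hdeg : d = 6 + Q.natDegree := by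
      rw [hd, hNQ, natDegree_mul (pow_ne_zero 2 hFne) hQne, natDegree_pow, hF3]
    have hd6 : 6 ≤ d := by omega
    -- the quotient coefficients
    set q : ℤ → ℤ := fun n => if h : 0 ≤ n then Q.coeff n.toNat else 0 with hqdef
    have hq : ∀ n : ℤ, n < 0 → q n = 0 := by
      intro n hn; simp only [hqdef]; rw [dif_neg (by omega)]
    have hqtop : ∀ n : ℤ, (d:ℤ) - 6 < n → q n = 0 := by
      intro n hn
      by_cases h : 0 ≤ n
      · simp only [hqdef]; rw [dif_pos h]
        apply Polynomial.coeff_eq_zero_of_natDegree_lt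
        omega
      · simp only [hqdef]; rw [dif_neg h]
    set c : ℕ → ℤ := fun i => N.coeff i with hcdef
    have hqnat : ∀ (i m : ℕ), q ((i:ℤ) - m) = if m ≤ i then Q.coeff (i - m) else 0 := by
      intro i m
      by_cases h : m ≤ i
      · rw [if_pos h]; simp only [hqdef]; rw [dif_pos (by omega)]
        congr 1; omega
      · rw [if_neg h]; exact hq _ (by omega)
    have hNalt : N = Q*X^6 - 2*(Q*X^4) + 2*(Q*X^3) + Q*X^2 - 2*(Q*X^1) + Q := by
      rw [hNQ]; ring
    have hrec : ∀ i : ℕ, c i = q ((i:ℤ)-6) - 2*q ((i:ℤ)-4) + 2*q ((i:ℤ)-3) + q ((i:ℤ)-2) - 2*q ((i:ℤ)-1) + q (i:ℤ) := by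
      intro i
      have h0 : q (i:ℤ) = Q.coeff i := by
        simp only [hqdef]; rw [dif_pos (by omega)]; norm_num
      have h6 := hqnat i 6; have h4 := hqnat i 4; have h3 := hqnat i 3
      have h2 := hqnat i 2; have h1 := hqnat i 1
      push_cast at h6 h4 h3 h2 h1
      rw [h6, h4, h3, h2, h1, h0]
      simp only [hcdef]
      conv_lhs => rw [hNalt]
      simp only [coeff_sub, coeff_add, coeff_ofNat_mul, coeff_mul_X_pow']
    have hc0 : c 0 = 1 := hN0
    have hc01 : ∀ i, c i = 0 ∨ c i = 1 := by
      intro i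
      have := hN01 i
      simpa using this
    have hc1 : ∀ i, |c i| ≤ 1 := by
      intro i; rcases hc01 i with h|h <;> rw [h] <;> norm_num
    -- the real root ρ
    obtain ⟨ρ, hρmem, hρroot⟩ := intermediate_value_Icc
      (by norm_num : (1.324717:ℝ) ≤ 1.324718)
      ((continuous_pow 3 |>.sub continuous_id |>.sub continuous_const).continuousOn)
      (show (0:ℝ) ∈ Set.Icc ((1.324717:ℝ)^3 - 1.324717 - 1) ((1.324718:ℝ)^3 - 1.324718 - 1) by
        constructor <;> norm_num)
    obtain ⟨hρl, hρu⟩ := Set.mem_Icc.mp hρmem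
    have hρ3 : ρ^3 = ρ + 1 := by
      have : ρ^3 - ρ - 1 = 0 := hρroot
      linarith
    have hρ13 : (1.3:ℝ) < ρ := by linarith
    -- the complex roots
    set s : ℝ := Real.sqrt (3*ρ^2 - 4) with hsdef
    have hs2 : s^2 = 3*ρ^2 - 4 := Real.sq_sqrt (by nlinarith)
    have hs0 : 0 < s := Real.sqrt_pos.mpr (by nlinarith)
    set β : ℂ := ⟨ρ/2, s/2⟩ with hβdef
    set γ : ℂ := ⟨ρ/2, -s/2⟩ with hγdef
    have hsum : β + γ = (ρ:ℂ) := by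
      apply Complex.ext <;>
        simp [hβdef, hγdef, Complex.add_re, Complex.add_im, Complex.ofReal_re, Complex.ofReal_im] <;> ring
    have hprod : β*γ = (ρ:ℂ)^2 - 1 := by
      apply Complex.ext <;>
        simp [hβdef, hγdef, Complex.mul_re, Complex.mul_im, pow_two, Complex.sub_re, Complex.sub_im,
          Complex.ofReal_re, Complex.ofReal_im, Complex.one_re, Complex.one_im] <;> nlinarith [hs2]
    have hρ3C : ((ρ:ℂ))^3 = (ρ:ℂ) + 1 := by exact_mod_cast congrArg (fun x : ℝ => (x:ℂ)) hρ3
    have hquadβ : β^2 = (ρ:ℂ)*β - (ρ:ℂ)^2 + 1 := by linear_combination β*hsum - hprod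
    have hquadγ : γ^2 = (ρ:ℂ)*γ - (ρ:ℂ)^2 + 1 := by linear_combination γ*hsum - hprod
    have hβ3 : β^3 - β + 1 = 0 := by linear_combination (β + (ρ:ℂ))*hquadβ - hρ3C
    have hγ3 : γ^3 - γ + 1 = 0 := by linear_combination (γ + (ρ:ℂ))*hquadγ - hρ3C
    have hnormβ : Complex.abs β ^ 2 = ρ^2 - 1 := by
      rw [Complex.sq_abs, Complex.normSq_mk]; nlinarith [hs2]
    have hnormγ : Complex.abs γ ^ 2 = ρ^2 - 1 := by
      rw [Complex.sq_abs, Complex.normSq_mk]; nlinarith [hs2]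
    have hβne : β ≠ 0 := by
      intro h
      have := congrArg Complex.im h
      simp [hβdef] at this
      linarith
    have hγne : γ ≠ 0 := by
      intro h
      have := congrArg Complex.im h
      simp [hγdef] at this
      linarith
    have h0β : 0 < Complex.abs β := Complex.abs.pos hβne
    have h0γ : 0 < Complex.abs γ := Complex.abs.pos hγne
    have hβu : Complex.abs β ≤ 0.86884 := by nlinarith [hnormβ, h0β.le]
    have hγu : Complex.abs γ ≤ 0.86884 := by nlinarith [hnormγ, h0γ.le]
    have h1β : Complex.abs β < 1 := by nlinarith [hβu]
    have h1γ : Complex.abs γ < 1 := by nlinarith [hγu]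
    -- root conditions on N
    have hFz : ∀ (z : ℂ), z^3 - z + 1 = 0 → (aeval z) ((X:Polynomial ℤ)^3 - X + 1) = 0 := by
      intro z hz
      simp only [map_add, map_sub, map_pow, aeval_X, map_one]
      exact hz
    have hNz : ∀ (z : ℂ), z^3 - z + 1 = 0 → (aeval z) N = 0 := by
      intro z hz
      rw [hNQ, map_mul, map_pow, hFz z hz]
      ring
    have hNdz : ∀ (z : ℂ), z^3 - z + 1 = 0 → (aeval z) (derivative N) = 0 := by
      intro z hz
      have hF0 := hFz z hz
      set F : Polynomial ℤ := X^3 - X + 1 with hFdef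
      rw [hNQ, derivative_mul, derivative_pow]
      simp only [map_add, map_mul, map_pow]
      rw [hF0]
      ring
    have hsumform : ∀ (z : ℂ), (aeval z) N = 0 → ∑ i ∈ range (d+1), (c i : ℂ)*z^i = 0 := by
      intro z hz
      have h := Polynomial.aeval_eq_sum_range' (R := ℤ) (p := N) (show N.natDegree < d+1 by omega) z
      rw [hz] at h
      calc ∑ i ∈ range (d+1), (c i : ℂ)*z^i = ∑ i ∈ range (d+1), N.coeff i • z^i := by
            apply Finset.sum_congr rfl
            intro i _
            rw [zsmul_eq_mul]
      _ = 0 := h.symm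
    have hdsumform : ∀ (z : ℂ), (aeval z) (derivative N) = 0 →
        ∑ j ∈ range d, ((j:ℂ)+1)*(c (j+1) : ℂ)*z^j = 0 := by
      intro z hz
      have hdd : (derivative N).natDegree < d := by
        have h1 := Polynomial.natDegree_derivative_le N
        omega
      have h := Polynomial.aeval_eq_sum_range' (R := ℤ) hdd z
      rw [hz] at h
      calc ∑ j ∈ range d, ((j:ℂ)+1)*(c (j+1) : ℂ)*z^j
          = ∑ j ∈ range d, (derivative N).coeff j • z^j := by
            apply Finset.sum_congr rfl
            intro j _
            rw [Polynomial.coeff_derivative, zsmul_eq_mul]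
            push_cast
            ring
      _ = 0 := h.symm
    have hNsβ := hsumform β (hNz β hβ3)
    have hNsγ := hsumform γ (hNz γ hγ3)
    have hNdsβ := hdsumform β (hNdz β hβ3)
    have hNdsγ := hdsumform γ (hNdz γ hγ3)
    -- numeric bounds
    have h308 : 1/(ρ-1) ≤ (3.08:ℝ) := by
      rw [div_le_iff₀ (by linarith)]
      nlinarith
    have h9485 : 1/(ρ-1)^2 ≤ (9.485:ℝ) := by
      rw [div_le_iff₀ (pow_pos (by linarith) 2)]
      nlinarith [mul_self_nonneg (ρ - 1.324717)]
    have h763β : 1/(1-Complex.abs β) ≤ (7.63:ℝ) := by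
      rw [div_le_iff₀ (by linarith)]
      linarith
    have h763γ : 1/(1-Complex.abs γ) ≤ (7.63:ℝ) := by
      rw [div_le_iff₀ (by linarith)]
      linarith
    have h58β : 1/(1-Complex.abs β)^2 ≤ (58.3:ℝ) := by
      rw [div_le_iff₀ (pow_pos (by linarith) 2)]
      nlinarith [mul_self_nonneg (1 - Complex.abs β - 0.13116)]
    have h58γ : 1/(1-Complex.abs γ)^2 ≤ (58.3:ℝ) := by
      rw [div_le_iff₀ (pow_pos (by linarith) 2)]
      nlinarith [mul_self_nonneg (1 - Complex.abs γ - 0.13116)]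
    -- the backward induction
    have main : ∀ j : ℕ, j ≤ d → StQ q (d + 1 - j) ∈ Cset := by
      intro j
      induction j with
      | zero =>
          intro _
          have hzero : StQ q (d+1) = ((0,0,0,0,0,0) : S6) := by
            simp only [StQ]
            rw [hqtop _ (by push_cast; omega), hqtop _ (by push_cast; omega),
              hqtop _ (by push_cast; omega), hqtop _ (by push_cast; omega),
              hqtop _ (by push_cast; omega), hqtop _ (by push_cast; omega)]
          rw [show d + 1 - 0 = d + 1 by omega, hzero]
          exact zero_mem
      | succ j ih =>
          intro hj
          have hK0 : d + 1 - (j+1) = d - j := by omega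
          rw [hK0]
          obtain ⟨K, hKeq⟩ : ∃ K, K = d - j := ⟨d - j, rfl⟩
          rw [← hKeq]
          have hK1 : 1 ≤ K := by omega
          have hKd : K ≤ d := by omega
          have hprev : StQ q (K+1) ∈ Cset := by
            have h := ih (by omega)
            rwa [show d + 1 - j = K + 1 by omega] at h
          have i1 : ((K+1:ℕ):ℤ) - 6 = (K:ℤ) - 5 := by push_cast; ring
          have i2 : ((K+1:ℕ):ℤ) - 5 = (K:ℤ) - 4 := by push_cast; ring
          have i3 : ((K+1:ℕ):ℤ) - 4 = (K:ℤ) - 3 := by push_cast; ring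
          have i4 : ((K+1:ℕ):ℤ) - 3 = (K:ℤ) - 2 := by push_cast; ring
          have i5 : ((K+1:ℕ):ℤ) - 2 = (K:ℤ) - 1 := by push_cast; ring
          have i6 : ((K+1:ℕ):ℤ) - 1 = (K:ℤ) := by push_cast; ring
          have hback : backfn (StQ q (K+1)) (c K) = StQ q K := by
            simp only [backfn, StQ]
            rw [i1, i2, i3, i4, i5, i6]
            simp only [Prod.mk.injEq, and_true]
            linarith [hrec K]
          have hrch : Rcheck (StQ q K) := by
            obtain ⟨K', rfl⟩ : ∃ K', K = K' + 1 := ⟨K - 1, by omega⟩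
            have hb1' : |SPol (StQ q (K'+1)) (-ρ)| ≤ 3.08 :=
              (boundR1 q c hq hrec hc1 hρ3 hρ13 (K'+1)).trans h308
            have hb2' : |SPdol (StQ q (K'+1)) (-ρ)| ≤ 9.485 :=
              (boundR2 q c hq hrec hc1 hρ3 hρ13 K').trans h9485
            have hb3' : Complex.abs (SPol (StQ q (K'+1)) β * SPol (StQ q (K'+1)) γ) ≤ 58.3 := by
              rw [map_mul]
              have b1 := (boundC1 q c hq hrec hc1 hβ3 h0β h1β d hNsβ (K'+1) (by omega)).trans h763β
              have b2 := (boundC1 q c hq hrec hc1 hγ3 h0γ h1γ d hNsγ (K'+1) (by omega)).trans h763γ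
              calc Complex.abs (SPol (StQ q (K'+1)) β) * Complex.abs (SPol (StQ q (K'+1)) γ)
                  ≤ 7.63 * 7.63 := mul_le_mul b1 b2 (Complex.abs.nonneg _) (by norm_num)
              _ ≤ 58.3 := by norm_num
            have hb4' : Complex.abs (SPdol (StQ q (K'+1)) β * SPdol (StQ q (K'+1)) γ) ≤ 3420 := by
              rw [map_mul]
              have b1 := (boundC2 q c hq hrec hc1 hβ3 h0β h1β d hNsβ hNdsβ K' (by omega)).trans h58β
              have b2 := (boundC2 q c hq hrec hc1 hγ3 h0γ h1γ d hNsγ hNdsγ K' (by omega)).trans h58γ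
              calc Complex.abs (SPdol (StQ q (K'+1)) β) * Complex.abs (SPdol (StQ q (K'+1)) γ)
                  ≤ 58.3 * 58.3 := mul_le_mul b1 b2 (Complex.abs.nonneg _) (by norm_num)
              _ ≤ 3420 := by norm_num
            exact rcheck_of_bounds hρl hρu hρ3 hquadβ hquadγ hsum hprod
              (StQ q (K'+1)) hb1' hb2' hb3' hb4'
          have hmem := mem_step (StQ q (K+1)) hprev (c K)
            (by rcases hc01 K with h|h <;> simp [h])
            (by rw [hback]; exact hrch)
          rwa [hback] at hmem
    -- conclusion
    have h1mem : StQ q 1 ∈ Cset := by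
      have h := main d le_rfl
      rwa [show d + 1 - d = 1 by omega] at h
    have hq0 : q 0 = 1 := by
      have h := hrec 0
      norm_num at h
      rw [hq (-6) (by norm_num), hq (-4) (by norm_num), hq (-3) (by norm_num),
        hq (-2) (by norm_num), hq (-1) (by norm_num)] at h
      have : c 0 = 1 := hc0
      linarith
    have hSt1 : StQ q 1 = ((0,0,0,0,0,1) : S6) := by
      have e : StQ q 1 = (q (-5), q (-4), q (-3), q (-2), q (-1), q 0) := by
        simp only [StQ, Nat.cast_one]
        norm_num
      rw [e, hq (-5) (by norm_num), hq (-4) (by norm_num), hq (-3) (by norm_num),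
        hq (-2) (by norm_num), hq (-1) (by norm_num), hq0]
    rw [hSt1] at h1mem
    exact init_not_mem h1mem
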